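/- arXiv:2312.07109 — 2 statements merged into one kernel-verified Lean document; each statement's English description precedes it below -/
import Mathlib

section
/- For any nonnegative integers m and n with 2m + n ≥ 1, there is a perfect 4-coloring of the Doob graph D(m,n) with quotient matrix (2m+n)·(J − E) (every vertex of color i has exactly 2m+n neighbors of each color j ≠ i and no neighbor of its own color). -/
open SimpleGraph

/-- The Shrikhande graph: Cayley graph on `ZMod 4 × ZMod 4` with connection set
`{(0,1),(0,3),(1,0),(3,0),(1,1),(3,3)}`. -/
def shrikhande : SimpleGraph (ZMod 4 × ZMod 4) :=
  SimpleGraph.fromRel (fun x y =>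
    x - y ∈ ({(0, 1), (0, 3), (1, 0), (3, 0), (1, 1), (3, 3)} : Set (ZMod 4 × ZMod 4)))

/-- Vertices of the Doob graph `D(m,n)`. -/
abbrev DoobVertex (m n : ℕ) := (Fin m → ZMod 4 × ZMod 4) × (Fin n → ZMod 4)

/-- The Doob graph `D(m,n)`: the Cartesian (box) product of `m` copies of the
Shrikhande graph and `n` copies of the complete graph `K₄`. Two vertices are
adjacent iff they differ in exactly one coordinate and are adjacent in the
corresponding factor. -/
def doobGraph (m n : ℕ) : SimpleGraph (DoobVertex m n) :=
  SimpleGraph.fromRel (fun x y =>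
    (∃ i, shrikhande.Adj (x.1 i) (y.1 i) ∧ (∀ j, j ≠ i → x.1 j = y.1 j) ∧ x.2 = y.2) ∨
    (∃ i, x.2 i ≠ y.2 i ∧ (∀ j, j ≠ i → x.2 j = y.2 j) ∧ x.1 = y.1))

/-- `f` is a perfect coloring of `G` with quotient matrix `S`: `f` is surjective and
every vertex of color `i` has exactly `S i j` neighbors of color `j`. -/
def IsPerfectColoring {V C : Type*} (G : SimpleGraph V) (f : V → C)
    (S : Matrix C C ℕ) : Prop :=
  Function.Surjective f ∧
    ∀ x c, {y | G.Adj x y ∧ f y = c}.ncard = S (f x) c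

def S6 : Finset (ZMod 4 × ZMod 4) := {(0,1),(0,3),(1,0),(3,0),(1,1),(3,3)}
def gfun (p : ZMod 4 × ZMod 4) : ZMod 4 := p.1 + 2 * p.2
def D4 (δ : ZMod 4) : Finset (ZMod 4 × ZMod 4) := S6.filter (fun d => gfun d = δ)
def e4 : ZMod 4 ≃ Fin 4 := Equiv.refl (Fin 4)

lemma D4_card (δ : ZMod 4) (h : δ ≠ 0) : (D4 δ).card = 2 := by revert δ; decide

lemma shrik_adj (a b : ZMod 4 × ZMod 4) : shrikhande.Adj a b ↔ b - a ∈ S6 := by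
  revert a b
  simp only [shrikhande, SimpleGraph.fromRel_adj, Set.mem_insert_iff, Set.mem_singleton_iff,
    S6, Finset.mem_insert, Finset.mem_singleton]
  decide

lemma gfun_ne_zero {d : ZMod 4 × ZMod 4} (h : d ∈ S6) : gfun d ≠ 0 := by revert d; decide
lemma S6_ne_zero {d : ZMod 4 × ZMod 4} (h : d ∈ S6) : d ≠ 0 := by revert d; decide

def colSum {m n : ℕ} (x : DoobVertex m n) : ZMod 4 :=
  (∑ i, gfun (x.1 i)) + ∑ j, x.2 j

lemma gfun_add (a d : ZMod 4 × ZMod 4) : gfun (a + d) = gfun a + gfun d := by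
  simp only [gfun, Prod.fst_add, Prod.snd_add]; ring

lemma sum_update {α : Type*} [AddCommGroup α] {k : ℕ} (a : Fin k → α) (i : Fin k) (v : α) :
    ∑ j, Function.update a i v j = (∑ j, a j) + (v - a i) := by
  rw [Finset.sum_update_of_mem (Finset.mem_univ i)]
  rw [← Finset.sum_erase_add _ _ (Finset.mem_univ i), Finset.sdiff_singleton_eq_erase]
  abel

lemma colSum_update_fst {m n : ℕ} (x : DoobVertex m n) (i : Fin m) (d : ZMod 4 × ZMod 4) :
    colSum (Function.update x.1 i (x.1 i + d), x.2) = colSum x + gfun d := by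
  simp only [colSum]
  have : (fun j => gfun (Function.update x.1 i (x.1 i + d) j))
      = Function.update (fun j => gfun (x.1 j)) i (gfun (x.1 i + d)) := by
    funext j
    rcases eq_or_ne j i with rfl | h
    · simp
    · simp [Function.update_of_ne h]
  rw [show (∑ j, gfun (Function.update x.1 i (x.1 i + d) j))
      = ∑ j, Function.update (fun j => gfun (x.1 j)) i (gfun (x.1 i + d)) j from by rw [this]]
  rw [sum_update, gfun_add]
  ring

lemma colSum_update_snd {m n : ℕ} (x : DoobVertex m n) (j : Fin n) (δ : ZMod 4) :
    colSum (x.1, Function.update x.2 j (x.2 j + δ)) = colSum x + δ := by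
  simp only [colSum]
  rw [sum_update]
  ring

lemma doob_adj {m n : ℕ} (x y : DoobVertex m n) :
    (doobGraph m n).Adj x y ↔ x ≠ y ∧
      ((∃ i, shrikhande.Adj (x.1 i) (y.1 i) ∧ (∀ j, j ≠ i → x.1 j = y.1 j) ∧ x.2 = y.2) ∨
       (∃ i, x.2 i ≠ y.2 i ∧ (∀ j, j ≠ i → x.2 j = y.2 j) ∧ x.1 = y.1)) := by
  rw [doobGraph, SimpleGraph.fromRel_adj]
  constructor
  · rintro ⟨hne, h | h⟩
    · exact ⟨hne, h⟩
    · refine ⟨hne, ?_⟩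
      rcases h with ⟨i, ha, hj, he⟩ | ⟨i, ha, hj, he⟩
      · exact Or.inl ⟨i, ha.symm, fun j hj' => (hj j hj').symm, he.symm⟩
      · exact Or.inr ⟨i, Ne.symm ha, fun j hj' => (hj j hj').symm, he.symm⟩
  · rintro ⟨hne, h⟩
    exact ⟨hne, Or.inl h⟩

/-- Vertices adjacent to `x` with a given colSum shift, for δ ≠ 0. -/
lemma count_neighbors {m n : ℕ} (x : DoobVertex m n) (δ : ZMod 4) (hδ : δ ≠ 0) :
    {y : DoobVertex m n | (doobGraph m n).Adj x y ∧ colSum y = colSum x + δ}.ncard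
      = 2 * m + n := by
  classical
  set Φ : (Fin m × {d // d ∈ D4 δ}) ⊕ Fin n → DoobVertex m n := fun t =>
    match t with
    | Sum.inl (i, d) => (Function.update x.1 i (x.1 i + d.1), x.2)
    | Sum.inr j => (x.1, Function.update x.2 j (x.2 j + δ)) with hΦ
  have hmemS6 : ∀ {d : ZMod 4 × ZMod 4}, d ∈ D4 δ → d ∈ S6 ∧ gfun d = δ := by
    intro d hd; exact Finset.mem_filter.mp hd
  have hinj : Function.Injective Φ := by
    rintro (⟨i, d⟩ | j) (⟨i', d'⟩ | j') h
    · have h1 := congrArg Prod.fst h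
      simp only [hΦ] at h1
      rcases eq_or_ne i i' with rfl | hii
      · have h0 : x.1 i + d.1 = x.1 i + d'.1 := by
          simpa using congrFun h1 i
        have hd : d.1 = d'.1 := add_left_cancel h0
        simp [Subtype.ext hd]
      · have h0 : x.1 i + d.1 = x.1 i := by
          simpa [Function.update_of_ne hii] using congrFun h1 i
        exact absurd (add_eq_left.mp h0) (S6_ne_zero (hmemS6 d.2).1)
    · have h2 := congrArg Prod.snd h
      simp only [hΦ] at h2
      have h0 : x.2 j' = x.2 j' + δ := by simpa using congrFun h2 j'
      exact absurd (left_eq_add.mp h0) hδ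
    · have h2 := congrArg Prod.snd h
      simp only [hΦ] at h2
      have h0 : x.2 j + δ = x.2 j := by simpa using congrFun h2 j
      exact absurd (add_eq_left.mp h0) hδ
    · rcases eq_or_ne j j' with rfl | hjj
      · rfl
      · have h2 := congrArg Prod.snd h
        simp only [hΦ] at h2
        have h0 : x.2 j + δ = x.2 j := by
          simpa [Function.update_of_ne hjj] using congrFun h2 j
        exact absurd (add_eq_left.mp h0) hδ
  have hset : {y : DoobVertex m n | (doobGraph m n).Adj x y ∧ colSum y = colSum x + δ}
      = Set.range Φ := by
    ext y
    simp only [Set.mem_setOf_eq, Set.mem_range]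
    constructor
    · rintro ⟨hadj, hsum⟩
      rw [doob_adj] at hadj
      obtain ⟨hne, ⟨i, ha, hj, he⟩ | ⟨j, ha, hj, he⟩⟩ := hadj
      · set d := y.1 i - x.1 i with hd
        have hdS : d ∈ S6 := (shrik_adj _ _).mp ha
        have hy : y = (Function.update x.1 i (x.1 i + d), x.2) := by
          refine Prod.ext ?_ he.symm
          funext k
          rcases eq_or_ne k i with rfl | hk
          · simp [hd]
          · simp [Function.update_of_ne hk, (hj k hk).symm]
        have hg : gfun d = δ := by
          rw [hy, colSum_update_fst] at hsum
          exact add_left_cancel hsum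
        exact ⟨Sum.inl (i, ⟨d, Finset.mem_filter.mpr ⟨hdS, hg⟩⟩), hy.symm⟩
      · set d := y.2 j - x.2 j with hd
        have hy : y = (x.1, Function.update x.2 j (x.2 j + d)) := by
          refine Prod.ext he.symm ?_
          funext k
          rcases eq_or_ne k j with rfl | hk
          · simp [hd]
          · simp [Function.update_of_ne hk, (hj k hk).symm]
        have hg : d = δ := by
          rw [hy, colSum_update_snd] at hsum
          exact add_left_cancel hsum
        rw [hg] at hy
        exact ⟨Sum.inr j, hy.symm⟩
    · rintro ⟨(⟨i, d⟩ | j), rfl⟩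
      · obtain ⟨hdS, hg⟩ := hmemS6 d.2
        have hdne : (d : ZMod 4 × ZMod 4) ≠ 0 := S6_ne_zero hdS
        refine ⟨?_, by rw [colSum_update_fst, hg]⟩
        rw [doob_adj]
        constructor
        · intro hxy
          have := congrFun (congrArg Prod.fst hxy) i
          simp only [hΦ, Function.update_self] at this
          exact hdne (by linear_combination -this)
        · refine Or.inl ⟨i, ?_, fun j hj => (Function.update_of_ne hj _ _).symm, rfl⟩
          rw [shrik_adj]
          simp [hΦ, hdS]
      · refine ⟨?_, by rw [colSum_update_snd]⟩
        rw [doob_adj]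
        constructor
        · intro hxy
          have := congrFun (congrArg Prod.snd hxy) j
          simp only [hΦ, Function.update_self] at this
          exact hδ (by linear_combination -this)
        · refine Or.inr ⟨j, ?_, fun k hk => (Function.update_of_ne hk _ _).symm, rfl⟩
          simp [hΦ, hδ]
  rw [hset, ← Set.image_univ, Set.ncard_image_of_injective _ hinj, Set.ncard_univ,
    Nat.card_eq_fintype_card]
  simp [Fintype.card_sum, Fintype.card_prod, Fintype.card_coe, D4_card δ hδ]
  ring

lemma adj_colSum_ne {m n : ℕ} {x y : DoobVertex m n}
    (h : (doobGraph m n).Adj x y) : colSum y ≠ colSum x := by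
  rw [doob_adj] at h
  obtain ⟨hne, ⟨i, ha, hj, he⟩ | ⟨j, ha, hj, he⟩⟩ := h
  · set d := y.1 i - x.1 i with hd
    have hdS : d ∈ S6 := (shrik_adj _ _).mp ha
    have hy : y = (Function.update x.1 i (x.1 i + d), x.2) := by
      refine Prod.ext ?_ he.symm
      funext k
      rcases eq_or_ne k i with rfl | hk
      · simp [hd]
      · simp [Function.update_of_ne hk, (hj k hk).symm]
    rw [hy, colSum_update_fst]
    intro hc
    exact gfun_ne_zero hdS (by linear_combination hc)
  · set d := y.2 j - x.2 j with hd
    have hy : y = (x.1, Function.update x.2 j (x.2 j + d)) := by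
      refine Prod.ext he.symm ?_
      funext k
      rcases eq_or_ne k j with rfl | hk
      · simp [hd]
      · simp [Function.update_of_ne hk, (hj k hk).symm]
    rw [hy, colSum_update_snd]
    intro hc
    exact ha (by linear_combination -hc)

theorem stmt_4 (m n : ℕ) (hmn : 1 ≤ 2 * m + n) :
    ∃ f : DoobVertex m n → Fin 4,
      IsPerfectColoring (doobGraph m n) f
        (fun i j => if i = j then 0 else 2 * m + n) := by
  classical
  refine ⟨fun x => e4 (colSum x), ?_, ?_⟩
  · -- surjectivity
    intro c
    have hz : colSum ((fun _ => (0 : ZMod 4 × ZMod 4), fun _ => (0 : ZMod 4)) : DoobVertex m n)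
        = 0 := by simp [colSum, gfun]
    rcases Nat.eq_zero_or_pos m |>.symm with hm | hm
    · set z : DoobVertex m n := (fun _ => 0, fun _ => 0) with hzdef
      refine ⟨(Function.update z.1 ⟨0, hm⟩ (z.1 ⟨0, hm⟩ + (e4.symm c, 0)), z.2), ?_⟩
      beta_reduce
      rw [colSum_update_fst]
      simp only [hz]
      show e4 (0 + gfun (e4.symm c, 0)) = c
      simp [gfun, e4]
      rfl
    · have hn : 0 < n := by omega
      set z : DoobVertex m n := (fun _ => 0, fun _ => 0) with hzdef
      refine ⟨(z.1, Function.update z.2 ⟨0, hn⟩ (z.2 ⟨0, hn⟩ + e4.symm c)), ?_⟩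
      beta_reduce
      rw [colSum_update_snd]
      simp only [hz]
      show e4 (0 + e4.symm c) = c
      simp
  · intro x c
    simp only
    by_cases h : e4 (colSum x) = c
    · rw [if_pos h]
      have : {y : DoobVertex m n | (doobGraph m n).Adj x y ∧ e4 (colSum y) = c} = ∅ := by
        ext y
        simp only [Set.mem_setOf_eq, Set.mem_empty_iff_false, iff_false, not_and]
        intro hadj hc
        exact adj_colSum_ne hadj (e4.injective (hc.trans h.symm))
      rw [this]; simp
    · rw [if_neg h]
      set δ : ZMod 4 := e4.symm c - colSum x with hδdef
      have hδ : δ ≠ 0 := by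
        intro h0
        apply h
        have : e4.symm c = colSum x := by linear_combination h0
        rw [← this]; simp
      have : {y : DoobVertex m n | (doobGraph m n).Adj x y ∧ e4 (colSum y) = c}
          = {y : DoobVertex m n | (doobGraph m n).Adj x y ∧ colSum y = colSum x + δ} := by
        ext y
        simp only [Set.mem_setOf_eq, and_congr_right_iff]
        intro _
        constructor
        · intro hc; rw [← e4.symm_apply_apply (colSum y), hc, hδdef]; ring
        · intro hc; rw [hc]
          have : colSum x + δ = e4.symm c := by rw [hδdef]; ring
          rw [this]; simp
      rw [this, count_neighbors x δ hδ]
end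

section
/- For every a ∈ (ZMod 4) × (ZMod 4), the set C^a = {x ∈ V(D(4,0)) : x_1 + x_2 + x_3 + x_4 = a} of vertices of the Doob graph D(4,0) (where x_i ∈ (ZMod 4)×(ZMod 4) are the four coordinates of x) can be partitioned into four codes C^a_0, C^a_1, C^a_2, C^a_3, each with code distance at least 3. -/
open SimpleGraph

/-! ### Auxiliary development -/

abbrev R4 := ZMod 4 × ZMod 4

def genL : List R4 := [(0,1),(0,3),(1,0),(3,0),(1,1),(3,3)]

def Gen (g : R4) : Prop := g ∈ genL

instance : DecidablePred Gen := fun g => by unfold Gen; infer_instance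

lemma mem_S_iff (z : R4) :
    z ∈ ({(0, 1), (0, 3), (1, 0), (3, 0), (1, 1), (3, 3)} : Set R4) ↔ Gen z := by
  simp [Gen, genL]

lemma gen_neg {g : R4} (h : Gen g) : Gen (-g) := by revert h; revert g; decide

lemma gen_ne_zero {g : R4} (h : Gen g) : g ≠ 0 := by revert h; revert g; decide

/-- multiplication by the Eisenstein unit ω (with ω² = -1-ω) on `R4 ≅ Z4[ω]`. -/
def wmul (p : R4) : R4 := (-p.2, p.1 - p.2)

/-- reduction mod 2. -/
def m2 (p : R4) : ZMod 2 × ZMod 2 := ((p.1.val : ZMod 2), (p.2.val : ZMod 2))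

lemma wmul_add (a b : R4) : wmul (a + b) = wmul a + wmul b := by
  simp only [wmul, Prod.mk_add_mk, Prod.fst_add, Prod.snd_add, Prod.mk.injEq]
  constructor <;> ring

lemma m2_add (a b : R4) : m2 (a + b) = m2 a + m2 b := by revert a b; decide

/-- the vector that is `g` in coordinate `i` and zero elsewhere. -/
def ee (i : Fin 4) (g : R4) : Fin 4 → R4 := Function.update 0 i g

lemma ee_zero (i : Fin 4) : ee i 0 = 0 := by
  funext j; simp [ee, Function.update_apply]

lemma ee_add (i : Fin 4) (g h : R4) : ee i g + ee i h = ee i (g + h) := by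
  funext j; by_cases hj : j = i <;> simp [ee, Function.update_apply, hj]

/-- the coloring functional: `x₁ + ω x₂ + (1+ω) x₃` reduced mod 2. -/
def col (x : Fin 4 → R4) : ZMod 2 × ZMod 2 :=
  m2 (x 1 + wmul (x 2) + (x 3 + wmul (x 3)))

lemma col_add (u v : Fin 4 → R4) : col (u + v) = col u + col v := by
  have h : (u 1 + v 1) + wmul (u 2 + v 2) + ((u 3 + v 3) + wmul (u 3 + v 3))
      = (u 1 + wmul (u 2) + (u 3 + wmul (u 3)))
        + (v 1 + wmul (v 2) + (v 3 + wmul (v 3))) := by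
    rw [wmul_add, wmul_add]; ring
  unfold col
  rw [Pi.add_apply, Pi.add_apply, Pi.add_apply, h, m2_add]

lemma sum_ee (i : Fin 4) (g : R4) : (∑ j, ee i g j) = g := by
  fin_cases i <;> simp [ee, Fin.sum_univ_four, Function.update_apply]

lemma sum_move (x : Fin 4 → R4) (i : Fin 4) (g : R4) :
    (∑ j, (x + ee i g) j) = (∑ j, x j) + g := by
  simp [Finset.sum_add_distrib, sum_ee]

/-- structure of an edge of the Doob graph `D(4,0)`. -/
lemma adj_struct {x y : DoobVertex 4 0} (h : (doobGraph 4 0).Adj x y) :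
    ∃ i g, Gen g ∧ y = (x.1 + ee i g, x.2) := by
  rw [doobGraph, fromRel_adj] at h
  obtain ⟨hne, h | h⟩ := h
  · obtain ⟨i, hadj, hoff, h2⟩ | ⟨i0, -⟩ := h
    · refine ⟨i, y.1 i - x.1 i, ?_, ?_⟩
      · rw [shrikhande, fromRel_adj] at hadj
        obtain ⟨-, hd | hd⟩ := hadj
        · rw [mem_S_iff] at hd
          have := gen_neg hd; simpa using this
        · rwa [mem_S_iff] at hd
      · refine Prod.ext ?_ h2.symm
        funext j
        by_cases hj : j = i
        · subst hj; simp [ee]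
        · simp [ee, Function.update_apply, hj, (hoff j hj).symm]
    · exact i0.elim0
  · obtain ⟨i, hadj, hoff, h2⟩ | ⟨i0, -⟩ := h
    · refine ⟨i, y.1 i - x.1 i, ?_, ?_⟩
      · rw [shrikhande, fromRel_adj] at hadj
        obtain ⟨-, hd | hd⟩ := hadj
        · rwa [mem_S_iff] at hd
        · rw [mem_S_iff] at hd
          have := gen_neg hd; simpa using this
      · refine Prod.ext ?_ h2
        funext j
        by_cases hj : j = i
        · subst hj; simp [ee]
        · simp [ee, Function.update_apply, hj, hoff j hj]
    · exact i0.elim0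

/-- adjacency of a generator move. -/
lemma adj_move (x : DoobVertex 4 0) (i : Fin 4) (g : R4) (hg : Gen g) :
    (doobGraph 4 0).Adj x (x.1 + ee i g, x.2) := by
  have hgg : x.1 i ≠ x.1 i + g := by
    intro h
    exact gen_ne_zero hg (by linear_combination h.symm)
  rw [doobGraph, fromRel_adj]
  constructor
  · intro hc
    apply hgg
    have := congrArg (fun z => z.1 i) hc
    simpa [ee] using this
  · left; left
    refine ⟨i, ?_, ?_, rfl⟩
    · rw [shrikhande, fromRel_adj]
      refine ⟨by simpa [ee] using hgg, Or.inl ?_⟩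
      rw [mem_S_iff]
      have : x.1 i - (x.1 + ee i g) i = -g := by simp [ee]
      rw [this]; exact gen_neg hg
    · intro j hj; simp [ee, Function.update_apply, hj]

lemma reach_list (l : List R4) (hl : ∀ g ∈ l, Gen g) :
    ∀ (x : DoobVertex 4 0) (i : Fin 4),
      (doobGraph 4 0).Reachable x (x.1 + ee i l.sum, x.2) := by
  induction l with
  | nil =>
    intro x i
    rw [List.sum_nil, ee_zero, add_zero]
  | cons g l ih =>
    intro x i
    have h1 : (doobGraph 4 0).Adj x (x.1 + ee i g, x.2) :=
      adj_move x i g (hl g List.mem_cons_self)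
    have h2 := ih (fun g hg => hl g (List.mem_cons_of_mem _ hg)) (x.1 + ee i g, x.2) i
    have h3 : ((x.1 + ee i g) + ee i l.sum, x.2) = (x.1 + ee i (g + l.sum), x.2) := by
      rw [add_assoc, ee_add]
    rw [h3] at h2
    simpa [List.sum_cons] using h1.reachable.trans h2

lemma gen_decomp (d : R4) : ∃ l : List R4, (∀ g ∈ l, Gen g) ∧ l.sum = d := by
  refine ⟨List.replicate d.1.val (1,0) ++ List.replicate d.2.val (0,1), ?_, ?_⟩
  · intro g hg
    rcases List.mem_append.1 hg with h | h <;>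
      rw [List.eq_of_mem_replicate h] <;> decide
  · rw [List.sum_append, List.sum_replicate, List.sum_replicate]
    have h1 : ∀ (a : ZMod 4), (a.val : ZMod 4) = a := by decide
    have : ∀ n : ℕ, n • ((1 : ZMod 4), (0 : ZMod 4)) = ((n : ZMod 4), 0) := by
      intro n; rw [Prod.smul_def]; simp [nsmul_eq_mul]
    rw [this]
    have : ∀ n : ℕ, n • ((0 : ZMod 4), (1 : ZMod 4)) = (0, (n : ZMod 4)) := by
      intro n; rw [Prod.smul_def]; simp [nsmul_eq_mul]
    rw [this, h1, h1, Prod.mk_add_mk, add_zero, zero_add]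

lemma reach_move (x : DoobVertex 4 0) (i : Fin 4) (d : R4) :
    (doobGraph 4 0).Reachable x (x.1 + ee i d, x.2) := by
  obtain ⟨l, hl, hs⟩ := gen_decomp d
  have := reach_list l hl x i
  rwa [hs] at this

lemma doob_reach (x y : DoobVertex 4 0) : (doobGraph 4 0).Reachable x y := by
  have h0 := reach_move x 0 (y.1 0 - x.1 0)
  have h1 := reach_move (x.1 + ee 0 (y.1 0 - x.1 0), x.2) 1 (y.1 1 - x.1 1)
  have h2 := reach_move (x.1 + ee 0 (y.1 0 - x.1 0) + ee 1 (y.1 1 - x.1 1), x.2) 2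
    (y.1 2 - x.1 2)
  have h3 := reach_move (x.1 + ee 0 (y.1 0 - x.1 0) + ee 1 (y.1 1 - x.1 1)
    + ee 2 (y.1 2 - x.1 2), x.2) 3 (y.1 3 - x.1 3)
  have hfin : (x.1 + ee 0 (y.1 0 - x.1 0) + ee 1 (y.1 1 - x.1 1)
      + ee 2 (y.1 2 - x.1 2) + ee 3 (y.1 3 - x.1 3), x.2) = y := by
    refine Prod.ext ?_ (funext fun j => j.elim0)
    funext j
    fin_cases j <;> simp [ee, Function.update_apply]
  rw [← hfin]
  exact ((h0.trans h1).trans h2).trans h3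

def enc : Fin 4 → ZMod 2 × ZMod 2 := ![(0,0),(1,0),(0,1),(1,1)]

def bb1 : Fin 4 → R4 := ![0, (1,0), 0, (1,0)]
def bb2 : Fin 4 → R4 := ![0, 0, (1,0), (1,0)]

theorem stmt_10 (a : ZMod 4 × ZMod 4) :
    ∃ C : Fin 4 → Set (DoobVertex 4 0),
      (∀ i, (C i).Nonempty) ∧
      (∀ i j, i ≠ j → Disjoint (C i) (C j)) ∧
      (⋃ i, C i) = {x : DoobVertex 4 0 | (∑ p, x.1 p) = a} ∧
      (∀ i, ∀ x ∈ C i, ∀ y ∈ C i, x ≠ y → 3 ≤ (doobGraph 4 0).dist x y) := by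
  refine ⟨fun i => {x | (∑ p, x.1 p) = a ∧ col x.1 = enc i}, ?_, ?_, ?_, ?_⟩
  · -- nonempty
    intro i
    refine ⟨(![a - bb1 i - bb2 i, bb1 i, bb2 i, 0], fun j => j.elim0), ?_, ?_⟩
    · show (∑ p, (![a - bb1 i - bb2 i, bb1 i, bb2 i, 0]) p) = a
      rw [Fin.sum_univ_four]
      simp; ring
    · show col (![a - bb1 i - bb2 i, bb1 i, bb2 i, 0]) = enc i
      unfold col
      simp only [Matrix.cons_val_one, Matrix.head_cons, Matrix.cons_val_two,
        Matrix.tail_cons, Matrix.cons_val_three]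
      fin_cases i <;> decide
  · -- disjoint
    intro i j hij
    rw [Set.disjoint_left]
    rintro x ⟨-, hx⟩ ⟨-, hx'⟩
    have : enc i = enc j := hx ▸ hx'
    have henc : Function.Injective enc := by decide
    exact hij (henc this)
  · -- union
    ext x
    simp only [Set.mem_iUnion, Set.mem_setOf_eq]
    constructor
    · rintro ⟨i, h, -⟩; exact h
    · intro h
      have hsurj : ∀ c : ZMod 2 × ZMod 2, ∃ i, enc i = c := by decide
      obtain ⟨i, hi⟩ := hsurj (col x.1)
      exact ⟨i, h, hi.symm⟩
  · -- distance
    rintro i x ⟨hxs, hxc⟩ y ⟨hys, hyc⟩ hxy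
    by_contra hlt
    push_neg at hlt
    obtain ⟨p, hp⟩ := (doob_reach x y).exists_walk_length_eq_dist
    have hple : p.length ≤ 2 := by omega
    cases p with
    | nil => exact hxy rfl
    | cons h q =>
      cases q with
      | nil =>
        obtain ⟨i', g, hg, hy⟩ := adj_struct h
        rw [hy] at hys
        have : (∑ p, x.1 p) + g = a := by rw [← sum_move]; exact hys
        exact gen_ne_zero hg (by rw [hxs] at this; linear_combination this)
      | cons h' q' =>
        cases q' with
        | nil =>
          obtain ⟨i', g, hg, hw⟩ := adj_struct h
          obtain ⟨j', g', hg', hy⟩ := adj_struct h'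
          rw [hw] at hy
          simp only at hy
          -- hy : y = (x.1 + ee i' g + ee j' g', x.2)
          have hsum : g + g' = 0 := by
            rw [hy] at hys
            have : ((∑ p, x.1 p) + g) + g' = a := by
              rw [← sum_move, ← sum_move]; exact hys
            rw [hxs] at this; linear_combination this
          by_cases hij : i' = j'
          · subst hij
            apply hxy
            rw [hy, add_assoc, ee_add, hsum, ee_zero, add_zero]
          · have hcol : col (ee i' g) + col (ee j' g') = 0 := by
              rw [hy] at hyc
              have : col x.1 + col (ee i' g) + col (ee j' g') = col x.1 := by
                rw [← col_add, ← col_add]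
                rw [hyc, hxc]
            -- contradiction by finite check
              have h2 := this
              abel_nf at h2 ⊢
              linear_combination (norm := abel_nf) h2
            have key : ∀ i j : Fin 4, i ≠ j → ∀ g, Gen g → ∀ g', Gen g' →
                g + g' = 0 → col (ee i g) + col (ee j g') ≠ 0 := by decide
            exact key i' j' hij g hg g' hg' hsum hcol
        | cons h'' q'' => simp [SimpleGraph.Walk.length_cons] at hple
end
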